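/- Suppose τ₀, τ₁, τ₂ ∈ H satisfy ⟨τ₀,τ₀⟩ = ⟨τ₁,τ₁⟩ = ⟨τ₂,τ₂⟩ = 1/3 and ⟨Φ₀₁, Φ₁₀⟩ = 0. Then ⟨τ₁, τ₂⟩ = ω/3, and consequently τ₂ = ω τ₁. -/

import Mathlib

open scoped BigOperators ComplexConjugate

variable {H : Type*} [NormedAddCommGroup H] [InnerProductSpace ℂ H]

/-- The primitive cube root of unity `ω = e^{2πi/3}`. -/
noncomputable def ω : ℂ := Complex.exp (2 * Real.pi * Complex.I / 3)

/-- `|v_j⟩ = (1/√3)(i|0⟩ + ω^{-j}|1⟩ + ω^{-2j}|2⟩)` in `ℂ³`. -/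
noncomputable def v (j : Fin 3) : Fin 3 → ℂ := fun k =>
  ((Real.sqrt 3 : ℂ))⁻¹ * (if k = 0 then Complex.I else ω ^ (-((j : ℕ) * (k : ℕ) : ℤ)))

/-- `|v_j'⟩ = (1/√3)(|0⟩ + ω^{-j}|1⟩ + i ω^{-2j}|2⟩)` in `ℂ³`. -/
noncomputable def v' (j : Fin 3) : Fin 3 → ℂ := fun k =>
  ((Real.sqrt 3 : ℂ))⁻¹ * (if k = 2 then Complex.I else 1) * ω ^ (-((j : ℕ) * (k : ℕ) : ℤ))

/-- The inner product on `ℂ³ ⊗ H`, viewed as triples of elements of `H`: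
`⟨x, y⟩ = ∑ₖ ⟨xₖ, yₖ⟩` (conjugate-linear in the first argument). -/
noncomputable def ip (x y : Fin 3 → H) : ℂ := ∑ k, (inner ℂ (x k) (y k) : ℂ)

/-- `Φ₀₀ = √2 [ |v₀⟩⊗τ₀ − ½|v₁⟩⊗τ₁ − ½|v₂⟩⊗τ₂ ]` in `ℂ³ ⊗ H`. -/
noncomputable def Phi00 (τ₀ τ₁ τ₂ : H) : Fin 3 → H := fun k =>
  (Real.sqrt 2 : ℂ) • (v 0 k • τ₀ - ((1/2 : ℂ) * v 1 k) • τ₁ - ((1/2 : ℂ) * v 2 k) • τ₂)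

/-- `Φ₀₁ = √2 [ −(√3/2)|v₁'⟩⊗τ₁ + (√3/2)|v₂'⟩⊗τ₂ ]` in `ℂ³ ⊗ H`. -/
noncomputable def Phi01 (τ₁ τ₂ : H) : Fin 3 → H := fun k =>
  (Real.sqrt 2 : ℂ) • ((-((Real.sqrt 3 : ℂ) / 2) * v' 1 k) • τ₁ +
    (((Real.sqrt 3 : ℂ) / 2) * v' 2 k) • τ₂)

/-- `Φ₁₀ = √2 [ (√3/2)|v₁⟩⊗τ₁ − (√3/2)|v₂⟩⊗τ₂ ]` in `ℂ³ ⊗ H`. -/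
noncomputable def Phi10 (τ₁ τ₂ : H) : Fin 3 → H := fun k =>
  (Real.sqrt 2 : ℂ) • ((((Real.sqrt 3 : ℂ) / 2) * v 1 k) • τ₁ -
    (((Real.sqrt 3 : ℂ) / 2) * v 2 k) • τ₂)

/-- `Φ₁₁ = √2 [ |v₀'⟩⊗τ₀ − ½|v₁'⟩⊗τ₁ − ½|v₂'⟩⊗τ₂ ]` in `ℂ³ ⊗ H`. -/
noncomputable def Phi11 (τ₀ τ₁ τ₂ : H) : Fin 3 → H := fun k =>
  (Real.sqrt 2 : ℂ) • (v' 0 k • τ₀ - ((1/2 : ℂ) * v' 1 k) • τ₁ - ((1/2 : ℂ) * v' 2 k) • τ₂)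


lemma CW.homega : ω = -1/2 + (Real.sqrt 3 / 2) * Complex.I := by
  have h : (2 * Real.pi * Complex.I / 3 : ℂ) = ((Real.pi - Real.pi/3 : ℝ) : ℂ) * Complex.I := by
    push_cast; ring
  rw [ω, h, Complex.exp_mul_I, ← Complex.ofReal_cos, ← Complex.ofReal_sin,
    Real.cos_pi_sub, Real.sin_pi_sub, Real.cos_pi_div_three, Real.sin_pi_div_three]
  push_cast; ring

lemma CW.hs3c : ((Real.sqrt 3 : ℝ) : ℂ)^2 = 3 := by
  norm_cast; rw [Real.sq_sqrt]; norm_num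

lemma CW.hcube : ω^3 = 1 := by
  rw [CW.homega]
  linear_combination (3/8 - (Real.sqrt 3:ℂ)/8*Complex.I)*CW.hs3c +
    (-(3*((Real.sqrt 3:ℂ))^2/8) + ((Real.sqrt 3:ℂ)^3/8)*Complex.I)*Complex.I_sq

lemma CW.hinv : ω⁻¹ = ω^2 := by
  have h : ω * ω^2 = 1 := by linear_combination CW.hcube
  exact inv_eq_of_mul_eq_one_right h

lemma CW.homega2 : ω^2 = -1/2 - (Real.sqrt 3 / 2) * Complex.I := by
  rw [CW.homega]
  linear_combination (-1/4 : ℂ)*CW.hs3c + (((Real.sqrt 3:ℂ))^2/4)*Complex.I_sq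

lemma CW.hconj : (starRingEnd ℂ) ω = ω^2 := by
  have h : (starRingEnd ℂ) ω = -1/2 - (Real.sqrt 3/2) * Complex.I := by
    rw [CW.homega]
    simp only [map_add, map_neg, map_mul, map_div₀, Complex.conj_ofReal, Complex.conj_I,
      map_one, map_ofNat]
    ring
  rw [h, CW.homega]
  linear_combination (1/4 : ℂ)*CW.hs3c + (-(((Real.sqrt 3:ℂ))^2)/4)*Complex.I_sq

lemma CW.habs : ‖ω‖ = 1 := by
  rw [ω, Complex.norm_exp]
  rw [show (2 * (Real.pi:ℂ) * Complex.I / 3).re = 0 by simp]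
  exact Real.exp_zero

set_option maxHeartbeats 1000000 in
lemma CW.inner_eq {H : Type*} [NormedAddCommGroup H] [InnerProductSpace ℂ H]
    (τ₁ τ₂ : H)
    (h1 : (inner ℂ τ₁ τ₁ : ℂ) = 1/3) (h2 : (inner ℂ τ₂ τ₂ : ℂ) = 1/3)
    (horth : ip (Phi01 τ₁ τ₂) (Phi10 τ₁ τ₂) = 0) :
    (inner ℂ τ₁ τ₂ : ℂ) = ω / 3 := by
  set z : ℂ := inner ℂ τ₁ τ₂ with hz
  have hz2 : (inner ℂ τ₂ τ₁ : ℂ) = conj z := by rw [hz, ← inner_conj_symm]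
  simp only [ip, Phi01, Phi10, Fin.sum_univ_three, inner_smul_left, inner_smul_right,
    inner_add_left, inner_sub_right, v, v', h1, h2, hz2, ← hz, zpow_neg, zpow_natCast,
    zpow_ofNat, map_zpow₀, map_mul, map_neg, map_div₀,
    map_inv₀, Complex.conj_ofReal, Complex.conj_I, map_one, map_ofNat] at horth
  norm_num [Fin.ext_iff] at horth
  rw [CW.hconj] at horth
  simp only [zpow_ofNat, zpow_natCast, show ω⁻¹ = ω^2 from CW.hinv,
    show ((ω^2):ℂ)⁻¹ = ω from inv_eq_of_mul_eq_one_left (by linear_combination CW.hcube),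
    show ((ω^4):ℂ)⁻¹ = ω^2 from inv_eq_of_mul_eq_one_left (by linear_combination (ω^3+1)*CW.hcube),
    show (((ω^2)^2):ℂ)⁻¹ = ω^2 from inv_eq_of_mul_eq_one_left (by linear_combination (ω^3+1)*CW.hcube),
    show (((ω^2)^4):ℂ)⁻¹ = ω from
      inv_eq_of_mul_eq_one_left (by linear_combination (ω^6+ω^3+1)*CW.hcube)] at horth
  rw [show ((Real.sqrt 3:ℝ):ℂ)⁻¹ = ((Real.sqrt 3:ℝ):ℂ)/3 from
    inv_eq_of_mul_eq_one_right (by linear_combination CW.hs3c/3)] at horth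
  rw [CW.homega2, CW.homega] at horth
  rw [CW.homega]
  have hs3 : (Real.sqrt 3) ^ 2 = 3 := Real.sq_sqrt (by norm_num)
  have hs2 : (Real.sqrt 2) ^ 2 = 2 := Real.sq_sqrt (by norm_num)
  have hs3pos : (0:ℝ) < Real.sqrt 3 := by positivity
  simp only [Complex.ext_iff, Complex.add_re, Complex.add_im, Complex.mul_re, Complex.mul_im,
    Complex.sub_re, Complex.sub_im, Complex.neg_re, Complex.neg_im, Complex.div_re, Complex.div_im,
    Complex.ofReal_re, Complex.ofReal_im, Complex.I_re, Complex.I_im, Complex.conj_re,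
    Complex.conj_im, Complex.zero_re, Complex.zero_im, Complex.one_re, Complex.one_im] at horth ⊢
  norm_num at horth ⊢
  obtain ⟨hRe, hIm⟩ := horth
  ring_nf at hRe hIm
  have h34 : (Real.sqrt 3)^4 = 9 := by rw [show (4:ℕ) = 2*2 from rfl, pow_mul, hs3]; norm_num
  have h35 : (Real.sqrt 3)^5 = 9 * Real.sqrt 3 := by rw [pow_succ, h34]
  have h36 : (Real.sqrt 3)^6 = 27 := by rw [pow_succ, h35]; nlinarith [hs3]
  rw [hs2, h34, h35, h36] at hRe hIm
  have hx : z.re = -(1/6) := by linear_combination (-1/2 : ℝ)*hRe + (1/2 : ℝ)*hIm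
  have hy : Real.sqrt 3 * z.im = 1/2 := by linear_combination 2*hIm - 3*hx
  refine ⟨hx, ?_⟩
  have h6 : Real.sqrt 3 * (Real.sqrt 3 * 2 / 4 * 3 / 9) = 1/2 := by linear_combination hs3/6
  exact mul_left_cancel₀ hs3pos.ne' (hy.trans h6.symm)

/-- If `⟨τ₀,τ₀⟩ = ⟨τ₁,τ₁⟩ = ⟨τ₂,τ₂⟩ = 1/3` and `⟨Φ₀₁,Φ₁₀⟩ = 0`, then
`⟨τ₁,τ₂⟩ = ω/3`, and consequently `τ₂ = ω τ₁`. -/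
theorem tau_two_eq_omega_tau_one {H : Type*} [NormedAddCommGroup H] [InnerProductSpace ℂ H]
    (τ₀ τ₁ τ₂ : H)
    (h0 : (inner ℂ τ₀ τ₀ : ℂ) = 1/3) (h1 : (inner ℂ τ₁ τ₁ : ℂ) = 1/3)
    (h2 : (inner ℂ τ₂ τ₂ : ℂ) = 1/3)
    (horth : ip (Phi01 τ₁ τ₂) (Phi10 τ₁ τ₂) = 0) :
    (inner ℂ τ₁ τ₂ : ℂ) = ω / 3 ∧ τ₂ = ω • τ₁ := by
  have hkey : (inner ℂ τ₁ τ₂ : ℂ) = ω / 3 := CW.inner_eq τ₁ τ₂ h1 h2 horth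
  refine ⟨hkey, ?_⟩
  have hn1 : ‖τ₁‖ ^ 2 = 1/3 := by
    have h := inner_self_eq_norm_sq_to_K (𝕜 := ℂ) τ₁
    rw [h1] at h
    have h2' : ((1/3 : ℝ) : ℂ) = ((‖τ₁‖^2 : ℝ) : ℂ) := by push_cast; convert h using 2 <;> rfl
    exact_mod_cast h2'.symm
  have hn2 : ‖τ₂‖ ^ 2 = 1/3 := by
    have h := inner_self_eq_norm_sq_to_K (𝕜 := ℂ) τ₂
    rw [h2] at h
    have h2' : ((1/3 : ℝ) : ℂ) = ((‖τ₂‖^2 : ℝ) : ℂ) := by push_cast; convert h using 2 <;> rfl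
    exact_mod_cast h2'.symm
  have hτ₁ : τ₁ ≠ 0 := by
    intro h; rw [h, norm_zero] at hn1; norm_num at hn1
  have hτ₂ : τ₂ ≠ 0 := by
    intro h; rw [h, norm_zero] at hn2; norm_num at hn2
  have h13 : ‖τ₁‖ * ‖τ₂‖ = 1/3 := by
    have hprod : (‖τ₁‖ * ‖τ₂‖)^2 = (1/3:ℝ)^2 := by rw [mul_pow, hn1, hn2]; norm_num
    nlinarith [mul_nonneg (norm_nonneg τ₁) (norm_nonneg τ₂),
      sq_nonneg (‖τ₁‖ * ‖τ₂‖ - 1/3), sq_nonneg (‖τ₁‖ * ‖τ₂‖ + 1/3)]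
  have hnorm : ‖(inner ℂ τ₁ τ₂ : ℂ)‖ = ‖τ₁‖ * ‖τ₂‖ := by
    rw [hkey, h13, norm_div]
    simp [CW.habs]
  obtain ⟨r, hr0, hr⟩ := (norm_inner_eq_norm_iff (𝕜 := ℂ) hτ₁ hτ₂).mp hnorm
  have hrω : r = ω := by
    have h' : (inner ℂ τ₁ τ₂ : ℂ) = r * (1/3) := by
      rw [hr, inner_smul_right, h1]
    rw [hkey] at h'
    linear_combination -3 * h'
  rw [hr, hrω]
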